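/- Let P and P' be two transition functions on a layered episodic MDP and set c = Σ_{k=0}^{L-1} max_{(s,a)∈S_k×A} ‖P(·|s,a) − P'(·|s,a)‖₁, where ‖P(·|s,a) − P'(·|s,a)‖₁ = Σ_{s'∈S_{k+1}} |P(s'|s,a) − P'(s'|s,a)|. Then for every stochastic policy π: (i) |q^{P,π}(s) − q^{P',π}(s)| ≤ c for every state s ≠ s_L, and (ii) Σ_{s ≠ s_L} |q^{P,π}(s) − q^{P',π}(s)| ≤ L·c. -/

import Mathlib

open Finset

/-- A layered episodic MDP: a finite state space partitioned into layers
`0, 1, …, L` (`L ≥ 1`) via the map `layer`, where layer `0` contains only the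
initial state `s0` and layer `L` contains only the terminal state `sL`,
together with a finite action set. -/
structure LayeredMDP where
  State : Type
  Action : Type
  fintState : Fintype State
  decEqState : DecidableEq State
  fintAction : Fintype Action
  L : ℕ
  one_le_L : 1 ≤ L
  layer : State → ℕ
  layer_le : ∀ s, layer s ≤ L
  s0 : State
  sL : State
  layer_s0 : layer s0 = 0
  layer_sL : layer sL = L
  eq_s0_of_layer : ∀ s, layer s = 0 → s = s0
  eq_sL_of_layer : ∀ s, layer s = L → s = sL

attribute [instance] LayeredMDP.fintState LayeredMDP.decEqState LayeredMDP.fintAction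

namespace LayeredMDP

variable (M : LayeredMDP)

/-- A substochastic transition: nonnegative weights, supported on the next
layer, summing to at most `1` at every non-terminal state-action pair (the
missing mass is interpreted as moving directly to the terminal state). -/
def IsSubTransition (P : M.State → M.Action → M.State → ℝ) : Prop :=
  (∀ s a s', 0 ≤ P s a s') ∧
  (∀ s a s', P s a s' ≠ 0 → M.layer s' = M.layer s + 1) ∧
  (∀ s a, M.layer s < M.L → ∑ s', P s a s' ≤ 1)

/-- A (fully stochastic) transition function: for each non-terminal `(s,a)`,
a probability distribution on the next layer. -/
def IsTransition (P : M.State → M.Action → M.State → ℝ) : Prop :=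
  (∀ s a s', 0 ≤ P s a s') ∧
  (∀ s a s', P s a s' ≠ 0 → M.layer s' = M.layer s + 1) ∧
  (∀ s a, M.layer s < M.L → ∑ s', P s a s' = 1)

/-- A stochastic policy: a probability distribution over actions at each state. -/
def IsPolicy (π : M.State → M.Action → ℝ) : Prop :=
  (∀ s a, 0 ≤ π s a) ∧ (∀ s, ∑ a, π s a = 1)

/-- `occAuxFrom P π u n s` : probability of being at state `s` after `n` steps
when starting from state `u`, following policy `π` under transition `P`. -/
def occAuxFrom (P : M.State → M.Action → M.State → ℝ) (π : M.State → M.Action → ℝ)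
    (u : M.State) : ℕ → M.State → ℝ
  | 0 => fun s => if s = u then 1 else 0
  | n + 1 => fun s => ∑ s', ∑ a', occAuxFrom P π u n s' * π s' a' * P s' a' s

/-- Occupancy measure started at `u`: `occFrom P π u s a` is the probability of
visiting `(s,a)` when starting from `u` and executing `π` under transition `P`. -/
def occFrom (P : M.State → M.Action → M.State → ℝ) (π : M.State → M.Action → ℝ)
    (u : M.State) (s : M.State) (a : M.Action) : ℝ :=
  (if M.layer u ≤ M.layer s then M.occAuxFrom P π u (M.layer s - M.layer u) s else 0) * π s a

/-- Occupancy measure `q^{P,π}(s,a)` (started at the initial state `s0`). -/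
def occ (P : M.State → M.Action → M.State → ℝ) (π : M.State → M.Action → ℝ)
    (s : M.State) (a : M.Action) : ℝ :=
  M.occFrom P π M.s0 s a

/-- State occupancy measure `q^{P,π}(s) = Σ_a q^{P,π}(s,a)`. -/
def occState (P : M.State → M.Action → M.State → ℝ) (π : M.State → M.Action → ℝ)
    (s : M.State) : ℝ :=
  ∑ a, M.occ P π s a

/-- Backward recursion for value functions: `valAux P π ℓ n s` is the value of
state `s` with `n` steps remaining. -/
def valAux (P : M.State → M.Action → M.State → ℝ) (π : M.State → M.Action → ℝ)
    (ℓ : M.State → M.Action → ℝ) : ℕ → M.State → ℝ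
  | 0 => fun _ => 0
  | n + 1 => fun s => ∑ a, π s a * (ℓ s a + ∑ s', P s a s' * valAux P π ℓ n s')

/-- State value function `V^{P,π}(s;ℓ)`. -/
def V (P : M.State → M.Action → M.State → ℝ) (π : M.State → M.Action → ℝ)
    (ℓ : M.State → M.Action → ℝ) (s : M.State) : ℝ :=
  M.valAux P π ℓ (M.L - M.layer s) s

/-- State-action value function `Q^{P,π}(s,a;ℓ)` (equal to `0` at the terminal layer). -/
def Q (P : M.State → M.Action → M.State → ℝ) (π : M.State → M.Action → ℝ)
    (ℓ : M.State → M.Action → ℝ) (s : M.State) (a : M.Action) : ℝ :=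
  if M.layer s < M.L then ℓ s a + ∑ s', P s a s' * M.V P π ℓ s' else 0

end LayeredMDP


section CorrProof

open LayeredMDP

variable (M : LayeredMDP)

noncomputable def corr (P P' : M.State → M.Action → M.State → ℝ) (k : ℕ) : ℝ :=
  ⨆ s ∈ {s : M.State | M.layer s = k}, ⨆ a : M.Action, ∑ s', |P s a s' - P' s a s'|

lemma le_corr (P P' : M.State → M.Action → M.State → ℝ) {k : ℕ} (s : M.State) (a : M.Action)
    (hs : M.layer s = k) :
    ∑ s', |P s a s' - P' s a s'| ≤ corr M P P' k := by
  have h1 : (∑ s', |P s a s' - P' s a s'|)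
      ≤ ⨆ a : M.Action, ∑ s', |P s a s' - P' s a s'| :=
    le_ciSup (f := fun a : M.Action => ∑ s', |P s a s' - P' s a s'|)
      (Set.Finite.bddAbove (Set.finite_range _)) a
  refine h1.trans ?_
  have hmem : s ∈ {s : M.State | M.layer s = k} := hs
  have h2 : (⨆ a : M.Action, ∑ s', |P s a s' - P' s a s'|)
      = ⨆ (_ : s ∈ {s : M.State | M.layer s = k}), ⨆ a : M.Action, ∑ s', |P s a s' - P' s a s'| :=
    (ciSup_pos (f := fun _ => ⨆ a : M.Action, ∑ s', |P s a s' - P' s a s'|) hmem).symm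
  rw [h2]
  exact le_ciSup (f := fun s : M.State =>
      ⨆ (_ : s ∈ {s : M.State | M.layer s = k}), ⨆ a : M.Action, ∑ s', |P s a s' - P' s a s'|)
    (Set.Finite.bddAbove (Set.finite_range _)) s

lemma corr_nonneg (P P' : M.State → M.Action → M.State → ℝ) [Nonempty M.Action] (k : ℕ) :
    0 ≤ corr M P P' k := by
  have hG : ∀ s : M.State,
      0 ≤ ⨆ (_ : s ∈ {s : M.State | M.layer s = k}), ⨆ a : M.Action, ∑ s', |P s a s' - P' s a s'| := by
    intro s
    by_cases hs : M.layer s = k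
    · have hmem : s ∈ {s : M.State | M.layer s = k} := hs
      rw [ciSup_pos (f := fun _ => ⨆ a : M.Action, ∑ s', |P s a s' - P' s a s'|) hmem]
      obtain ⟨a⟩ := (inferInstance : Nonempty M.Action)
      exact le_trans (Finset.sum_nonneg fun _ _ => abs_nonneg _)
        (le_ciSup (f := fun a : M.Action => ∑ s', |P s a s' - P' s a s'|)
          (Set.Finite.bddAbove (Set.finite_range _)) a)
    · haveI : IsEmpty (s ∈ {s : M.State | M.layer s = k}) := ⟨fun h => hs h⟩
      rw [Real.iSup_of_isEmpty]
  exact le_trans (hG M.s0) (le_ciSup (f := fun s : M.State =>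
      ⨆ (_ : s ∈ {s : M.State | M.layer s = k}), ⨆ a : M.Action, ∑ s', |P s a s' - P' s a s'|)
    (Set.Finite.bddAbove (Set.finite_range _)) M.s0)

lemma occAux_nonneg (P : M.State → M.Action → M.State → ℝ) (π : M.State → M.Action → ℝ)
    (hP : ∀ s a s', 0 ≤ P s a s') (hπ : ∀ s a, 0 ≤ π s a) (u : M.State) :
    ∀ n s, 0 ≤ M.occAuxFrom P π u n s := by
  intro n
  induction n with
  | zero => intro s; simp only [LayeredMDP.occAuxFrom]; positivity
  | succ n ih =>
    intro s
    simp only [LayeredMDP.occAuxFrom]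
    exact Finset.sum_nonneg fun s' _ => Finset.sum_nonneg fun a _ => by
      have := ih s'; have := hπ s' a; have := hP s' a s; positivity

lemma occAux_layer (P : M.State → M.Action → M.State → ℝ) (π : M.State → M.Action → ℝ)
    (hsupp : ∀ s a s', P s a s' ≠ 0 → M.layer s' = M.layer s + 1) :
    ∀ n (s : M.State), M.occAuxFrom P π M.s0 n s ≠ 0 → M.layer s = n := by
  intro n
  induction n with
  | zero =>
    intro s hs
    simp only [LayeredMDP.occAuxFrom] at hs
    by_cases h : s = M.s0
    · rw [h, M.layer_s0]
    · simp [h] at hs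
  | succ n ih =>
    intro s hs
    simp only [LayeredMDP.occAuxFrom] at hs
    obtain ⟨s', -, hs'⟩ := Finset.exists_ne_zero_of_sum_ne_zero hs
    obtain ⟨a, -, ha⟩ := Finset.exists_ne_zero_of_sum_ne_zero hs'
    have h1 : M.occAuxFrom P π M.s0 n s' ≠ 0 := fun h => ha (by rw [h]; ring)
    have h2 : P s' a s ≠ 0 := fun h => ha (by rw [h]; ring)
    rw [hsupp s' a s h2, ih s' h1]

lemma trans_sum_le_one (P : M.State → M.Action → M.State → ℝ) (hP : M.IsTransition P)
    (s : M.State) (a : M.Action) : ∑ s', P s a s' ≤ 1 := by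
  rcases lt_or_ge (M.layer s) M.L with h | h
  · exact le_of_eq (hP.2.2 s a h)
  · have hz : ∀ s', P s a s' = 0 := by
      intro s'
      by_contra hne
      have h1 := hP.2.1 s a s' hne
      have h2 := M.layer_le s'
      omega
    simp [hz]

lemma occAux_mass (P : M.State → M.Action → M.State → ℝ) (π : M.State → M.Action → ℝ)
    (hP : M.IsTransition P) (hπ : M.IsPolicy π) :
    ∀ n, ∑ s, M.occAuxFrom P π M.s0 n s ≤ 1 := by
  intro n
  induction n with
  | zero => simp [LayeredMDP.occAuxFrom]
  | succ n ih =>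
    have hnn := occAux_nonneg M P π hP.1 hπ.1 M.s0 n
    calc ∑ s, M.occAuxFrom P π M.s0 (n + 1) s
        = ∑ s', ∑ a, M.occAuxFrom P π M.s0 n s' * π s' a * ∑ s, P s' a s := by
          simp only [LayeredMDP.occAuxFrom]
          rw [Finset.sum_comm]
          refine Finset.sum_congr rfl fun s' _ => ?_
          rw [Finset.sum_comm]
          exact Finset.sum_congr rfl fun a _ => (Finset.mul_sum _ _ _).symm
      _ ≤ ∑ s', ∑ a, M.occAuxFrom P π M.s0 n s' * π s' a * 1 := by
          refine Finset.sum_le_sum fun s' _ => Finset.sum_le_sum fun a _ => ?_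
          exact mul_le_mul_of_nonneg_left (trans_sum_le_one M P hP s' a)
            (mul_nonneg (hnn s') (hπ.1 s' a))
      _ = ∑ s', M.occAuxFrom P π M.s0 n s' := by
          refine Finset.sum_congr rfl fun s' _ => ?_
          simp only [mul_one]
          rw [← Finset.mul_sum, hπ.2 s', mul_one]
      _ ≤ 1 := ih

lemma occAux_diff_le (P P' : M.State → M.Action → M.State → ℝ)
    (hP : M.IsTransition P) (hP' : M.IsTransition P')
    (π : M.State → M.Action → ℝ) (hπ : M.IsPolicy π) [Nonempty M.Action] :
    ∀ n, ∑ s, |M.occAuxFrom P π M.s0 n s - M.occAuxFrom P' π M.s0 n s|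
      ≤ ∑ k ∈ Finset.range n, corr M P P' k := by
  set f := M.occAuxFrom P π M.s0 with hf
  set g := M.occAuxFrom P' π M.s0 with hg
  have hgnn := occAux_nonneg M P' π hP'.1 hπ.1 M.s0
  intro n
  induction n with
  | zero => simp [hf, hg, LayeredMDP.occAuxFrom]
  | succ n ih =>
    have key : ∑ s, |f (n + 1) s - g (n + 1) s|
        ≤ (∑ s, |f n s - g n s|) + corr M P P' n := by
      calc ∑ s, |f (n + 1) s - g (n + 1) s|
          ≤ ∑ s, ∑ s', ∑ a,
              (π s' a * |f n s' - g n s'| * P s' a s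
                + π s' a * g n s' * |P s' a s - P' s' a s|) := by
            refine Finset.sum_le_sum fun s _ => ?_
            have h1 : f (n + 1) s - g (n + 1) s
                = ∑ s', ∑ a, (f n s' * π s' a * P s' a s - g n s' * π s' a * P' s' a s) := by
              simp only [hf, hg, LayeredMDP.occAuxFrom, Finset.sum_sub_distrib]
            rw [h1]
            refine le_trans (Finset.abs_sum_le_sum_abs _ _) ?_
            refine Finset.sum_le_sum fun s' _ => ?_
            refine le_trans (Finset.abs_sum_le_sum_abs _ _) ?_
            refine Finset.sum_le_sum fun a _ => ?_
            have heq : f n s' * π s' a * P s' a s - g n s' * π s' a * P' s' a s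
                = π s' a * ((f n s' - g n s') * P s' a s + g n s' * (P s' a s - P' s' a s)) := by
              ring
            rw [heq, abs_mul, abs_of_nonneg (hπ.1 s' a)]
            have hstep : |(f n s' - g n s') * P s' a s + g n s' * (P s' a s - P' s' a s)|
                ≤ |f n s' - g n s'| * P s' a s + g n s' * |P s' a s - P' s' a s| := by
              refine le_trans (abs_add_le _ _) (le_of_eq ?_)
              rw [abs_mul, abs_mul, abs_of_nonneg (hP.1 s' a s), abs_of_nonneg (hgnn n s')]
            refine le_trans (mul_le_mul_of_nonneg_left hstep (hπ.1 s' a)) (le_of_eq (by ring))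
        _ = ∑ s', ∑ a,
              (π s' a * |f n s' - g n s'| * (∑ s, P s' a s)
                + π s' a * g n s' * (∑ s, |P s' a s - P' s' a s|)) := by
            rw [Finset.sum_comm]
            refine Finset.sum_congr rfl fun s' _ => ?_
            rw [Finset.sum_comm]
            refine Finset.sum_congr rfl fun a _ => ?_
            rw [Finset.sum_add_distrib, ← Finset.mul_sum, ← Finset.mul_sum]
        _ ≤ ∑ s', ∑ a,
              (π s' a * |f n s' - g n s'| * 1
                + π s' a * g n s' * corr M P P' n) := by
            refine Finset.sum_le_sum fun s' _ => Finset.sum_le_sum fun a _ => ?_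
            refine add_le_add ?_ ?_
            · exact mul_le_mul_of_nonneg_left (trans_sum_le_one M P hP s' a)
                (mul_nonneg (hπ.1 s' a) (abs_nonneg _))
            · by_cases hg0 : g n s' = 0
              · simp [hg0]
              · have hl : M.layer s' = n := occAux_layer M P' π hP'.2.1 n s' hg0
                exact mul_le_mul_of_nonneg_left (le_corr M P P' s' a hl)
                  (mul_nonneg (hπ.1 s' a) (hgnn n s'))
        _ = (∑ s', |f n s' - g n s'|) + corr M P P' n * ∑ s', g n s' := by
            have hin : ∀ s' : M.State,
                ∑ a, (π s' a * |f n s' - g n s'| * 1 + π s' a * g n s' * corr M P P' n)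
                = |f n s' - g n s'| + corr M P P' n * g n s' := by
              intro s'
              rw [Finset.sum_add_distrib]
              congr 1
              · simp only [mul_one]
                rw [← Finset.sum_mul, hπ.2 s', one_mul]
              · have h3 : ∀ a, π s' a * g n s' * corr M P P' n
                    = corr M P P' n * g n s' * π s' a := fun a => by ring
                rw [Finset.sum_congr rfl fun a _ => h3 a, ← Finset.mul_sum, hπ.2 s', mul_one]
            rw [Finset.sum_congr rfl fun s' _ => hin s', Finset.sum_add_distrib,
              ← Finset.mul_sum]
        _ ≤ (∑ s', |f n s' - g n s'|) + corr M P P' n * 1 := by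
            refine add_le_add_right ?_ _
            exact mul_le_mul_of_nonneg_left (occAux_mass M P' π hP' hπ n) (corr_nonneg M P P' n)
        _ = (∑ s', |f n s' - g n s'|) + corr M P P' n := by rw [mul_one]
    calc ∑ s, |f (n + 1) s - g (n + 1) s|
        ≤ (∑ s, |f n s - g n s|) + corr M P P' n := key
      _ ≤ (∑ k ∈ Finset.range n, corr M P P' k) + corr M P P' n := add_le_add_left ih _
      _ = ∑ k ∈ Finset.range (n + 1), corr M P P' k := (Finset.sum_range_succ _ _).symm

end CorrProof

open LayeredMDP in
/-- **Occupancy difference under transition corruption (Corollary D.16).**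
For transition functions `P, P'` and
`c = Σ_{k<L} max_{(s,a) ∈ S_k×A} ‖P(·|s,a) − P'(·|s,a)‖₁`,
for every stochastic policy `π`:
(i) `|q^{P,π}(s) − q^{P',π}(s)| ≤ c` for every state `s ≠ s_L`, and
(ii) `Σ_{s ≠ s_L} |q^{P,π}(s) − q^{P',π}(s)| ≤ L·c`. -/
theorem occupancy_diff_corruption (M : LayeredMDP)
    (P P' : M.State → M.Action → M.State → ℝ)
    (hP : M.IsTransition P) (hP' : M.IsTransition P')
    (π : M.State → M.Action → ℝ) (hπ : M.IsPolicy π)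
    (c : ℝ)
    (hc : c = ∑ k ∈ Finset.range M.L,
      ⨆ s ∈ {s : M.State | M.layer s = k}, ⨆ a : M.Action,
        ∑ s', |P s a s' - P' s a s'|) :
    (∀ s, s ≠ M.sL → |M.occState P π s - M.occState P' π s| ≤ c) ∧
      (∑ s ∈ Finset.univ.filter (fun s => s ≠ M.sL),
          |M.occState P π s - M.occState P' π s| ≤ (M.L : ℝ) * c) := by
  have hAct : Nonempty M.Action := by
    rcases isEmpty_or_nonempty M.Action with h | h
    · exfalso
      have h1 := hπ.2 M.s0
      rw [Finset.univ_eq_empty, Finset.sum_empty] at h1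
      norm_num at h1
    · exact h
  have hc' : c = ∑ k ∈ Finset.range M.L, corr M P P' k := hc
  have hocc : ∀ (Pt : M.State → M.Action → M.State → ℝ) (s : M.State),
      M.occState Pt π s = M.occAuxFrom Pt π M.s0 (M.layer s) s := by
    intro Pt s
    unfold LayeredMDP.occState LayeredMDP.occ LayeredMDP.occFrom
    rw [M.layer_s0]
    simp only [Nat.zero_le, if_true, Nat.sub_zero]
    rw [← Finset.mul_sum, hπ.2 s, mul_one]
  have hlt : ∀ s : M.State, s ≠ M.sL → M.layer s < M.L := by
    intro s hs
    rcases lt_or_ge (M.layer s) M.L with h | h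
    · exact h
    · exact absurd (M.eq_sL_of_layer s (le_antisymm (M.layer_le s) h)) hs
  have hcnn : ∀ k, 0 ≤ corr M P P' k := corr_nonneg M P P'
  have hkey := occAux_diff_le M P P' hP hP' π hπ
  have hbound : ∀ n, n ≤ M.L →
      ∑ s, |M.occAuxFrom P π M.s0 n s - M.occAuxFrom P' π M.s0 n s| ≤ c := by
    intro n hn
    refine le_trans (hkey n) ?_
    rw [hc']
    exact Finset.sum_le_sum_of_subset_of_nonneg
      (Finset.range_subset_range.2 hn) (fun k _ _ => hcnn k)
  have hptwise : ∀ s : M.State, s ≠ M.sL → |M.occState P π s - M.occState P' π s| ≤ c := by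
    intro s hs
    rw [hocc P s, hocc P' s]
    refine le_trans ?_ (hbound (M.layer s) (M.layer_le s))
    exact Finset.single_le_sum (f := fun t => |M.occAuxFrom P π M.s0 (M.layer s) t
      - M.occAuxFrom P' π M.s0 (M.layer s) t|) (fun t _ => abs_nonneg _) (Finset.mem_univ s)
  refine ⟨hptwise, ?_⟩
  have hmaps : ∀ s ∈ Finset.univ.filter (fun s => s ≠ M.sL), M.layer s ∈ Finset.range M.L := by
    intro s hsmem
    rw [Finset.mem_filter] at hsmem
    exact Finset.mem_range.2 (hlt s hsmem.2)
  rw [← Finset.sum_fiberwise_of_maps_to hmaps]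
  calc ∑ k ∈ Finset.range M.L, ∑ s ∈ (Finset.univ.filter (fun s => s ≠ M.sL)).filter
          (fun s => M.layer s = k), |M.occState P π s - M.occState P' π s|
      ≤ ∑ k ∈ Finset.range M.L, (c : ℝ) := by
        refine Finset.sum_le_sum fun k hk => ?_
        have hsub : ∑ s ∈ (Finset.univ.filter (fun s => s ≠ M.sL)).filter
            (fun s => M.layer s = k), |M.occState P π s - M.occState P' π s|
            = ∑ s ∈ (Finset.univ.filter (fun s => s ≠ M.sL)).filter (fun s => M.layer s = k),
              |M.occAuxFrom P π M.s0 k s - M.occAuxFrom P' π M.s0 k s| := by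
          refine Finset.sum_congr rfl fun s hsmem => ?_
          rw [Finset.mem_filter] at hsmem
          rw [hocc P s, hocc P' s, hsmem.2]
        rw [hsub]
        refine le_trans (Finset.sum_le_sum_of_subset_of_nonneg
          (Finset.subset_univ _) (fun t _ _ => abs_nonneg _)) ?_
        exact hbound k (le_of_lt (Finset.mem_range.1 hk))
    _ = (M.L : ℝ) * c := by
        rw [Finset.sum_const, Finset.card_range, nsmul_eq_mul]
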